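/- Let n, p, l be nonnegative integers, U ⊆ ℝ^n an open set, and L ⊆ U a nonempty compact set. Then: (i) the set of restrictions to L of maps in C^l(U,ℝ^p) equals the set of restrictions to L of maps in C^l(ℝ^n,ℝ^p); and (ii) on this common set C^l(L,ℝ^p), the quotient topology coinduced by the restriction map ρ_U : C^l(U,ℝ^p) → C^l(L,ℝ^p) coincides with the quotient topology coinduced by the restriction map ρ_{ℝ^n} : C^l(ℝ^n,ℝ^p) → C^l(L,ℝ^p). -/

import Mathlib

open scoped Topology

/-- Partial derivative of `f` in the `i`-th coordinate direction. -/
noncomputable def pd {n : ℕ} (i : Fin n) (f : (Fin n → ℝ) → ℝ) : (Fin n → ℝ) → ℝ :=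
  fun x => fderiv ℝ f x (Pi.single i 1)

/-- The partial derivative `∂^|α| f / ∂x^α` associated with a multi-index `α`. -/
noncomputable def mpd {n : ℕ} (α : Fin n → ℕ) (f : (Fin n → ℝ) → ℝ) : (Fin n → ℝ) → ℝ :=
  (List.finRange n).foldr (fun i g => (pd i)^[α i] g) f

/-- The multi-indices `α = (α₁,…,αₙ)` with `|α| = α₁ + … + αₙ ≤ l`. -/
def multiIdx (n l : ℕ) : Finset (Fin n → ℕ) :=
  (Fintype.piFinset fun _ : Fin n => Finset.range (l + 1)).filter fun α => ∑ i, α i ≤ l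

/-- The seminorm `‖φ‖ = Σ_j Σ_{|α|≤l} sup_{x∈L} |∂^α φ_j (x)|`. -/
noncomputable def semN {n p : ℕ} (L : Set (Fin n → ℝ)) (l : ℕ)
    (φ : (Fin n → ℝ) → (Fin p → ℝ)) : ℝ :=
  ∑ j : Fin p, ∑ α ∈ multiIdx n l,
    sSup ((fun x => |mpd α (fun y => φ y j) x|) '' L)

/-- The space `C^l(U, ℝ^p)` of maps of class `C^l` on `U`. -/
def ClSpace (n p l : ℕ) (U : Set (Fin n → ℝ)) : Type :=
  {φ : (Fin n → ℝ) → (Fin p → ℝ) // ContDiffOn ℝ l φ U}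

/-- The `ε`-ball around `φ` for the seminorm `semN L l`. -/
noncomputable def semBall {n p l : ℕ} {U : Set (Fin n → ℝ)} (L : Set (Fin n → ℝ))
    (φ : ClSpace n p l U) (ε : ℝ) : Set (ClSpace n p l U) :=
  {ψ | semN L l (fun x => ψ.1 x - φ.1 x) < ε}

/-- The topology on `C^l(U, ℝ^p)` induced by the seminorm `semN L l`
(the seminorm balls form a basis). -/
noncomputable def seminormTop (n p l : ℕ) (U L : Set (Fin n → ℝ)) :
    TopologicalSpace (ClSpace n p l U) :=
  TopologicalSpace.generateFrom {S | ∃ φ ε, 0 < ε ∧ S = semBall L φ ε}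

/-- The restriction map `ρ_U : C^l(U,ℝ^p) → (L → ℝ^p)`, `φ ↦ φ|_L`. -/
def restrictMap (n p l : ℕ) (U L : Set (Fin n → ℝ)) (φ : ClSpace n p l U) :
    (L → (Fin p → ℝ)) :=
  fun x => φ.1 x

open scoped Manifold

namespace Stmt3Aux

variable {n : ℕ} {V : Set (Fin n → ℝ)}

theorem pd_congr (hV : IsOpen V) {f g : (Fin n → ℝ) → ℝ} (h : ∀ x ∈ V, f x = g x)
    (i : Fin n) {x : Fin n → ℝ} (hx : x ∈ V) : pd i f x = pd i g x := by
  have hfg : f =ᶠ[𝓝 x] g := Filter.eventually_of_mem (hV.mem_nhds hx) h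
  simp only [pd, hfg.fderiv_eq]

theorem pd_iter_congr (hV : IsOpen V) {f g : (Fin n → ℝ) → ℝ} (h : ∀ x ∈ V, f x = g x)
    (i : Fin n) (k : ℕ) : ∀ x ∈ V, (pd i)^[k] f x = (pd i)^[k] g x := by
  induction k with
  | zero => simpa using h
  | succ k ih =>
    intro x hx
    rw [Function.iterate_succ_apply', Function.iterate_succ_apply']
    exact pd_congr hV ih i hx

theorem foldr_congr (hV : IsOpen V) (α : Fin n → ℕ) :
    ∀ (s : List (Fin n)) (f g : (Fin n → ℝ) → ℝ), (∀ x ∈ V, f x = g x) →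
      ∀ x ∈ V, (s.foldr (fun i g => (pd i)^[α i] g) f) x
        = (s.foldr (fun i g => (pd i)^[α i] g) g) x := by
  intro s
  induction s with
  | nil => intro f g h x hx; simpa using h x hx
  | cons i t ih =>
    intro f g h x hx
    simp only [List.foldr_cons]
    exact pd_iter_congr hV (ih f g h) i (α i) x hx

theorem mpd_congr (hV : IsOpen V) (α : Fin n → ℕ) {f g : (Fin n → ℝ) → ℝ}
    (h : ∀ x ∈ V, f x = g x) {x : Fin n → ℝ} (hx : x ∈ V) : mpd α f x = mpd α g x :=
  foldr_congr hV α (List.finRange n) f g h x hx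

theorem pd_contDiffOn (hV : IsOpen V) {m : ℕ} {f : (Fin n → ℝ) → ℝ}
    (hf : ContDiffOn ℝ (m + 1 : ℕ) f V) (i : Fin n) : ContDiffOn ℝ (m : ℕ) (pd i f) V := by
  have h1 : ContDiffOn ℝ (m : ℕ) (fderiv ℝ f) V :=
    hf.fderiv_of_isOpen hV (by push_cast; exact le_rfl)
  exact h1.clm_apply contDiffOn_const

theorem pd_iter_contDiffOn (hV : IsOpen V) (i : Fin n) :
    ∀ (k m : ℕ) (f : (Fin n → ℝ) → ℝ), ContDiffOn ℝ ((m + k : ℕ)) f V →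
      ContDiffOn ℝ (m : ℕ) ((pd i)^[k] f) V := by
  intro k
  induction k with
  | zero => intro m f hf; simpa using hf
  | succ k ih =>
    intro m f hf
    rw [Function.iterate_succ_apply]
    refine ih m (pd i f) (pd_contDiffOn hV ?_ i)
    have e : m + (k + 1) = (m + k) + 1 := by ring
    rwa [e] at hf

theorem foldr_contDiffOn (hV : IsOpen V) (α : Fin n → ℕ) :
    ∀ (s : List (Fin n)) (m : ℕ) (f : (Fin n → ℝ) → ℝ),
      ContDiffOn ℝ ((m + (s.map α).sum : ℕ)) f V →
      ContDiffOn ℝ (m : ℕ) (s.foldr (fun i g => (pd i)^[α i] g) f) V := by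
  intro s
  induction s with
  | nil => intro m f hf; simpa using hf
  | cons i t ih =>
    intro m f hf
    simp only [List.foldr_cons]
    refine pd_iter_contDiffOn hV i (α i) m _ (ih (m + α i) f ?_)
    have e : m + α i + (t.map α).sum = m + ((i :: t).map α).sum := by
      simp [List.sum_cons]; ring
    rwa [e]

theorem sum_finRange_eq (α : Fin n → ℕ) : ((List.finRange n).map α).sum = ∑ i, α i := by
  simp [Finset.sum, Fin.univ_def]

theorem mpd_contDiffOn (hV : IsOpen V) {l : ℕ} (α : Fin n → ℕ) {f : (Fin n → ℝ) → ℝ}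
    (hf : ContDiffOn ℝ (l : ℕ) f V) (hα : ∑ i, α i ≤ l) :
    ContDiffOn ℝ ((l - ∑ i, α i : ℕ)) (mpd α f) V := by
  refine foldr_contDiffOn hV α (List.finRange n) (l - ∑ i, α i) f ?_
  have e : l - ∑ i, α i + ((List.finRange n).map α).sum = l := by
    rw [sum_finRange_eq]; omega
  rwa [e]

theorem mpd_continuousOn (hV : IsOpen V) {l : ℕ} (α : Fin n → ℕ) {f : (Fin n → ℝ) → ℝ}
    (hf : ContDiffOn ℝ (l : ℕ) f V) (hα : ∑ i, α i ≤ l) : ContinuousOn (mpd α f) V :=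
  (mpd_contDiffOn hV α hf hα).continuousOn

theorem pd_add (hV : IsOpen V) {m : ℕ} {f g : (Fin n → ℝ) → ℝ}
    (hf : ContDiffOn ℝ ((m + 1 : ℕ)) f V) (hg : ContDiffOn ℝ ((m + 1 : ℕ)) g V)
    (i : Fin n) {x : Fin n → ℝ} (hx : x ∈ V) :
    pd i (fun y => f y + g y) x = pd i f x + pd i g x := by
  have h1 : (1 : WithTop ℕ∞) ≤ ((m + 1 : ℕ) : WithTop ℕ∞) := by
    exact_mod_cast Nat.le_add_left 1 m
  have hdf : DifferentiableAt ℝ f x :=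
    (hf.contDiffAt (hV.mem_nhds hx)).differentiableAt (by exact_mod_cast Nat.succ_ne_zero m)
  have hdg : DifferentiableAt ℝ g x :=
    (hg.contDiffAt (hV.mem_nhds hx)).differentiableAt (by exact_mod_cast Nat.succ_ne_zero m)
  simp [pd, fderiv_fun_add hdf hdg]

theorem pd_iter_add (hV : IsOpen V) (i : Fin n) :
    ∀ (k : ℕ) (f g : (Fin n → ℝ) → ℝ), ContDiffOn ℝ (k : ℕ) f V → ContDiffOn ℝ (k : ℕ) g V →
      ∀ x ∈ V, (pd i)^[k] (fun y => f y + g y) x = (pd i)^[k] f x + (pd i)^[k] g x := by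
  intro k
  induction k with
  | zero => intro f g _ _ x _; simp
  | succ k ih =>
    intro f g hf hg x hx
    rw [Function.iterate_succ_apply, Function.iterate_succ_apply, Function.iterate_succ_apply]
    have h1 : ∀ y ∈ V, pd i (fun y => f y + g y) y = (fun y => pd i f y + pd i g y) y :=
      fun y hy => pd_add hV hf hg i hy
    calc (pd i)^[k] (pd i fun y => f y + g y) x
        = (pd i)^[k] (fun y => pd i f y + pd i g y) x := pd_iter_congr hV h1 i k x hx
      _ = (pd i)^[k] (pd i f) x + (pd i)^[k] (pd i g) x :=
          ih (pd i f) (pd i g) (pd_contDiffOn hV hf i) (pd_contDiffOn hV hg i) x hx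

theorem foldr_add (hV : IsOpen V) (α : Fin n → ℕ) :
    ∀ (s : List (Fin n)) (f g : (Fin n → ℝ) → ℝ),
      ContDiffOn ℝ (((s.map α).sum : ℕ)) f V → ContDiffOn ℝ (((s.map α).sum : ℕ)) g V →
      ∀ x ∈ V, s.foldr (fun i g => (pd i)^[α i] g) (fun y => f y + g y) x
        = s.foldr (fun i g => (pd i)^[α i] g) f x
          + s.foldr (fun i g => (pd i)^[α i] g) g x := by
  intro s
  induction s with
  | nil => intro f g _ _ x _; simp
  | cons i t ih =>
    intro f g hf hg x hx
    simp only [List.map_cons, List.sum_cons] at hf hg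
    simp only [List.foldr_cons]
    have hf' : ContDiffOn ℝ (((t.map α).sum : ℕ)) f V :=
      hf.of_le (by exact_mod_cast Nat.le_add_left _ _)
    have hg' : ContDiffOn ℝ (((t.map α).sum : ℕ)) g V :=
      hg.of_le (by exact_mod_cast Nat.le_add_left _ _)
    have h1 : ∀ y ∈ V, t.foldr (fun i g => (pd i)^[α i] g) (fun y => f y + g y) y
        = (fun y => t.foldr (fun i g => (pd i)^[α i] g) f y
            + t.foldr (fun i g => (pd i)^[α i] g) g y) y :=
      fun y hy => ih f g hf' hg' y hy
    calc (pd i)^[α i] (t.foldr (fun i g => (pd i)^[α i] g) fun y => f y + g y) x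
        = (pd i)^[α i] (fun y => t.foldr (fun i g => (pd i)^[α i] g) f y
            + t.foldr (fun i g => (pd i)^[α i] g) g y) x :=
          pd_iter_congr hV h1 i (α i) x hx
      _ = _ := by
          refine pd_iter_add hV i (α i) _ _ ?_ ?_ x hx
          · exact foldr_contDiffOn hV α t (α i) f hf
          · exact foldr_contDiffOn hV α t (α i) g hg

theorem mpd_add (hV : IsOpen V) {l : ℕ} (α : Fin n → ℕ) {f g : (Fin n → ℝ) → ℝ}
    (hf : ContDiffOn ℝ (l : ℕ) f V) (hg : ContDiffOn ℝ (l : ℕ) g V) (hα : ∑ i, α i ≤ l)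
    {x : Fin n → ℝ} (hx : x ∈ V) :
    mpd α (fun y => f y + g y) x = mpd α f x + mpd α g x := by
  have hle : (((((List.finRange n).map α).sum : ℕ)) : WithTop ℕ∞) ≤ (l : ℕ) := by
    rw [sum_finRange_eq]; exact_mod_cast hα
  exact foldr_add hV α (List.finRange n) f g (hf.of_le hle) (hg.of_le hle) x hx

theorem pd_zero (i : Fin n) : pd i (fun _ => (0 : ℝ)) = fun _ => (0 : ℝ) := by
  funext x; simp [pd]

theorem mpd_zero (α : Fin n → ℕ) : mpd α (fun _ => (0 : ℝ)) = fun _ => (0 : ℝ) := by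
  show (List.finRange n).foldr (fun i g => (pd i)^[α i] g) (fun _ => (0:ℝ)) = fun _ => (0:ℝ)
  induction (List.finRange n) with
  | nil => rfl
  | cons i t ih =>
    simp only [List.foldr_cons, ih]
    exact Function.iterate_fixed (pd_zero i) (α i)

variable {p l : ℕ} {L : Set (Fin n → ℝ)}

theorem comp_contDiffOn {φ : (Fin n → ℝ) → Fin p → ℝ} {m : WithTop ℕ∞}
    (hφ : ContDiffOn ℝ m φ V) (j : Fin p) : ContDiffOn ℝ m (fun y => φ y j) V :=
  (ContinuousLinearMap.proj (R := ℝ) (φ := fun _ : Fin p => ℝ) j).contDiff.comp_contDiffOn hφ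

theorem semN_congr (hV : IsOpen V) (hLV : L ⊆ V)
    {φ ψ : (Fin n → ℝ) → Fin p → ℝ} (h : ∀ x ∈ V, φ x = ψ x) :
    semN L l φ = semN L l ψ := by
  unfold semN
  refine Finset.sum_congr rfl fun j _ => Finset.sum_congr rfl fun α _ => ?_
  congr 1
  apply Set.image_congr
  intro x hx
  have := mpd_congr hV α (f := fun y => φ y j) (g := fun y => ψ y j)
    (fun y hy => by show φ y j = ψ y j; rw [h y hy]) (hLV hx)
  rw [this]

theorem semN_add_le (hV : IsOpen V) (hLV : L ⊆ V) (hL : IsCompact L) (hne : L.Nonempty)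
    {φ ψ : (Fin n → ℝ) → Fin p → ℝ}
    (hφ : ContDiffOn ℝ (l : ℕ) φ V) (hψ : ContDiffOn ℝ (l : ℕ) ψ V) :
    semN L l (fun x => φ x + ψ x) ≤ semN L l φ + semN L l ψ := by
  unfold semN
  rw [← Finset.sum_add_distrib]
  refine Finset.sum_le_sum fun j _ => ?_
  rw [← Finset.sum_add_distrib]
  refine Finset.sum_le_sum fun α hα => ?_
  have hαl : ∑ i, α i ≤ l := (Finset.mem_filter.1 hα).2
  have hFc : ContinuousOn (fun x => |mpd α (fun y => φ y j) x|) L :=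
    ((mpd_continuousOn hV α (comp_contDiffOn hφ j) hαl).mono hLV).abs
  have hGc : ContinuousOn (fun x => |mpd α (fun y => ψ y j) x|) L :=
    ((mpd_continuousOn hV α (comp_contDiffOn hψ j) hαl).mono hLV).abs
  have hFb : BddAbove ((fun x => |mpd α (fun y => φ y j) x|) '' L) :=
    (hL.image_of_continuousOn hFc).bddAbove
  have hGb : BddAbove ((fun x => |mpd α (fun y => ψ y j) x|) '' L) :=
    (hL.image_of_continuousOn hGc).bddAbove
  refine csSup_le (hne.image _) ?_
  rintro _ ⟨x, hx, rfl⟩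
  have hadd : mpd α (fun y => (φ y + ψ y) j) x
      = mpd α (fun y => φ y j) x + mpd α (fun y => ψ y j) x := by
    simp only [Pi.add_apply]
    exact mpd_add hV α (comp_contDiffOn hφ j) (comp_contDiffOn hψ j) hαl (hLV hx)
  calc |mpd α (fun y => (φ y + ψ y) j) x|
      ≤ |mpd α (fun y => φ y j) x| + |mpd α (fun y => ψ y j) x| := by
        rw [hadd]; exact abs_add_le _ _
    _ ≤ sSup ((fun x => |mpd α (fun y => φ y j) x|) '' L)
          + sSup ((fun x => |mpd α (fun y => ψ y j) x|) '' L) :=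
        add_le_add (le_csSup hFb ⟨x, hx, rfl⟩) (le_csSup hGb ⟨x, hx, rfl⟩)

theorem semN_sub_self (hne : L.Nonempty) (f : (Fin n → ℝ) → Fin p → ℝ) :
    semN L l (fun x => f x - f x) = 0 := by
  have h0 : (fun x : Fin n → ℝ => f x - f x) = (fun _ => (0 : Fin p → ℝ)) := by
    funext x; simp
  rw [h0]
  unfold semN
  have : ∀ j : Fin p, ∀ α ∈ multiIdx n l,
      sSup ((fun x => |mpd α (fun _ => (0 : Fin p → ℝ) j) x|) '' L) = 0 := by
    intro j α _
    have e : (fun x => |mpd α (fun _ => (0 : Fin p → ℝ) j) x|) = fun _ => (0 : ℝ) := by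
      have : (fun _ : Fin n → ℝ => (0 : Fin p → ℝ) j) = fun _ => (0 : ℝ) := by
        funext y; simp
      rw [this, mpd_zero]; funext x; simp
    rw [e, Set.Nonempty.image_const hne, csSup_singleton]
  calc ∑ j : Fin p, ∑ α ∈ multiIdx n l,
        sSup ((fun x => |mpd α (fun _ => (0 : Fin p → ℝ) j) x|) '' L)
      = ∑ j : Fin p, ∑ α ∈ multiIdx n l, (0 : ℝ) :=
        Finset.sum_congr rfl fun j _ => Finset.sum_congr rfl fun α hα => this j α hα
    _ = 0 := by simp

theorem exists_ball_subset {U : Set (Fin n → ℝ)} (hU : IsOpen U) (hL : IsCompact L)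
    (hne : L.Nonempty) (hLU : L ⊆ U) {t : Set (ClSpace n p l U)}
    (ht : IsOpen[seminormTop n p l U L] t) :
    ∀ a ∈ t, ∃ ε > 0, semBall L a ε ⊆ t := by
  have ht' : TopologicalSpace.GenerateOpen
      {S | ∃ φ ε, 0 < ε ∧ S = semBall L φ ε} t := ht
  clear ht
  induction ht' with
  | basic s hs =>
    obtain ⟨φ, ε0, hε0, rfl⟩ := hs
    intro a ha
    have ha' : semN L l (fun x => a.1 x - φ.1 x) < ε0 := ha
    refine ⟨ε0 - semN L l (fun x => a.1 x - φ.1 x), sub_pos.2 ha', fun ψ hψ => ?_⟩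
    have hψ' : semN L l (fun x => ψ.1 x - a.1 x)
        < ε0 - semN L l (fun x => a.1 x - φ.1 x) := hψ
    have heq : (fun x => ψ.1 x - φ.1 x)
        = fun x => (ψ.1 x - a.1 x) + (a.1 x - φ.1 x) := by
      funext x; abel
    have key : semN L l (fun x => ψ.1 x - φ.1 x)
        ≤ semN L l (fun x => ψ.1 x - a.1 x) + semN L l (fun x => a.1 x - φ.1 x) := by
      rw [heq]
      exact semN_add_le hU hLU hL hne (ψ.2.sub a.2) (a.2.sub φ.2)
    show semN L l (fun x => ψ.1 x - φ.1 x) < ε0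
    linarith
  | univ => intro a _; exact ⟨1, one_pos, fun _ _ => trivial⟩
  | inter s u _ _ ihs ihu =>
    intro a ha
    obtain ⟨ε1, h1, hs1⟩ := ihs a ha.1
    obtain ⟨ε2, h2, hs2⟩ := ihu a ha.2
    refine ⟨min ε1 ε2, lt_min h1 h2, fun ψ hψ => ?_⟩
    have hψ' : semN L l (fun x => ψ.1 x - a.1 x) < min ε1 ε2 := hψ
    exact ⟨hs1 (lt_of_lt_of_le hψ' (min_le_left _ _)),
      hs2 (lt_of_lt_of_le hψ' (min_le_right _ _))⟩
  | sUnion S _ ih =>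
    intro a ha
    obtain ⟨s0, hs0, has0⟩ := ha
    obtain ⟨ε, hε, hsub⟩ := ih s0 hs0 a has0
    exact ⟨ε, hε, fun ψ hψ => ⟨s0, hs0, hsub hψ⟩⟩

theorem isOpen_of_cover {U : Set (Fin n → ℝ)} (hne : L.Nonempty)
    {s : Set (ClSpace n p l U)} (h : ∀ a ∈ s, ∃ ε > 0, semBall L a ε ⊆ s) :
    IsOpen[seminormTop n p l U L] s := by
  choose ε hε hsub using h
  show TopologicalSpace.GenerateOpen {S | ∃ φ ε, 0 < ε ∧ S = semBall L φ ε} s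
  have hs : s = ⋃₀ {b | ∃ a, ∃ ha : a ∈ s, b = semBall L a (ε a ha)} := by
    ext ψ
    constructor
    · intro hψ
      refine ⟨semBall L ψ (ε ψ hψ), ⟨ψ, hψ, rfl⟩, ?_⟩
      show semN L l (fun x => ψ.1 x - ψ.1 x) < ε ψ hψ
      rw [semN_sub_self hne]
      exact hε ψ hψ
    · rintro ⟨b, ⟨a, ha, rfl⟩, hmem⟩
      exact hsub a ha hmem
  rw [hs]
  refine TopologicalSpace.GenerateOpen.sUnion _ ?_
  rintro b ⟨a, ha, rfl⟩
  exact TopologicalSpace.GenerateOpen.basic _ ⟨a, ε a ha, hε a ha, rfl⟩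

end Stmt3Aux

open Stmt3Aux in
theorem stmt3 (n p l : ℕ) (U L : Set (Fin n → ℝ)) (hU : IsOpen U) (hL : IsCompact L)
    (hne : L.Nonempty) (hLU : L ⊆ U) :
    Set.range (restrictMap n p l U L) = Set.range (restrictMap n p l Set.univ L) ∧
      TopologicalSpace.coinduced (restrictMap n p l U L) (seminormTop n p l U L) =
        TopologicalSpace.coinduced (restrictMap n p l Set.univ L)
          (seminormTop n p l Set.univ L) := by
  classical
  -- a smooth cutoff that is 0 on a neighborhood of Uᶜ and 1 on a neighborhood of L
  obtain ⟨χ₀, hχW, hχV, -⟩ := exists_contMDiffMap_zero_one_nhds_of_isClosed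
    (𝓘(ℝ, Fin n → ℝ)) (n := (⊤ : ℕ∞)) (hU.isClosed_compl) (hL.isClosed)
    (Set.disjoint_left.mpr fun x hx hx' => hx (hLU hx'))
  set χ : (Fin n → ℝ) → ℝ := ⇑χ₀ with hχdef
  have hχ : ContDiff ℝ (l : ℕ) χ := by
    have := χ₀.contMDiff.contDiff
    exact this.of_le (by exact_mod_cast le_top)
  obtain ⟨W, hWopen, hWU, hW0⟩ := eventually_nhdsSet_iff_exists.1 hχW
  obtain ⟨V, hVopen, hLV, hV1⟩ := eventually_nhdsSet_iff_exists.1 hχV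
  -- the extension map E and restriction map R
  have hE : ∀ ψ : ClSpace n p l U, ContDiffOn ℝ l (fun x => χ x • ψ.1 x) Set.univ := by
    intro ψ
    rw [contDiffOn_univ]
    rw [contDiff_iff_contDiffAt]
    intro x
    by_cases hx : x ∈ U
    · exact hχ.contDiffAt.smul (ψ.2.contDiffAt (hU.mem_nhds hx))
    · have hxW : x ∈ W := hWU hx
      have heq : (fun x => χ x • ψ.1 x) =ᶠ[𝓝 x] fun _ => (0 : Fin p → ℝ) :=
        Filter.eventually_of_mem (hWopen.mem_nhds hxW) fun y hy => by
          simp [hW0 y hy]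
      exact contDiffAt_const.congr_of_eventuallyEq heq
  let E : ClSpace n p l U → ClSpace n p l Set.univ := fun ψ => ⟨fun x => χ x • ψ.1 x, hE ψ⟩
  let R : ClSpace n p l Set.univ → ClSpace n p l U :=
    fun ψ => ⟨ψ.1, ψ.2.mono (Set.subset_univ U)⟩
  have hrestE : ∀ ψ, restrictMap n p l Set.univ L (E ψ) = restrictMap n p l U L ψ := by
    intro ψ
    funext x
    show χ x.1 • ψ.1 x.1 = ψ.1 x.1
    rw [hV1 x.1 (hLV x.2), one_smul]
  have hrestR : ∀ ψ, restrictMap n p l U L (R ψ) = restrictMap n p l Set.univ L ψ :=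
    fun ψ => rfl
  constructor
  · -- part (i)
    ext h
    simp only [Set.mem_range]
    constructor
    · rintro ⟨ψ, rfl⟩; exact ⟨E ψ, hrestE ψ⟩
    · rintro ⟨ψ, rfl⟩; exact ⟨R ψ, hrestR ψ⟩
  · -- part (ii)
    refine TopologicalSpace.ext_iff.2 fun S => ?_
    rw [isOpen_coinduced, isOpen_coinduced]
    constructor
    · -- ρ_U⁻¹ S open ⇒ ρ_univ⁻¹ S open
      intro h
      refine isOpen_of_cover hne fun a ha => ?_
      have haR : R a ∈ restrictMap n p l U L ⁻¹' S := by
        show restrictMap n p l U L (R a) ∈ S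
        rw [hrestR]; exact ha
      obtain ⟨ε, hε, hsub⟩ := exists_ball_subset hU hL hne hLU h (R a) haR
      refine ⟨ε, hε, fun ψ hψ => ?_⟩
      have hmem : R ψ ∈ semBall L (R a) ε := hψ
      have := hsub hmem
      show restrictMap n p l Set.univ L ψ ∈ S
      rw [← hrestR ψ]
      exact this
    · -- ρ_univ⁻¹ S open ⇒ ρ_U⁻¹ S open
      intro h
      refine isOpen_of_cover hne fun a ha => ?_
      have haE : E a ∈ restrictMap n p l Set.univ L ⁻¹' S := by
        show restrictMap n p l Set.univ L (E a) ∈ S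
        rw [hrestE]; exact ha
      obtain ⟨ε, hε, hsub⟩ := exists_ball_subset isOpen_univ hL hne (Set.subset_univ L)
        h (E a) haE
      refine ⟨ε, hε, fun ψ hψ => ?_⟩
      have hψ' : semN L l (fun x => ψ.1 x - a.1 x) < ε := hψ
      have hmem : E ψ ∈ semBall L (E a) ε := by
        show semN L l (fun x => (E ψ).1 x - (E a).1 x) < ε
        have hcongr : semN L l (fun x => (E ψ).1 x - (E a).1 x)
            = semN L l (fun x => ψ.1 x - a.1 x) := by
          refine semN_congr hVopen hLV fun x hx => ?_
          show χ x • ψ.1 x - χ x • a.1 x = ψ.1 x - a.1 x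
          rw [hV1 x hx, one_smul, one_smul]
        rw [hcongr]
        exact hψ'
      have := hsub hmem
      show restrictMap n p l U L ψ ∈ S
      rw [← hrestE ψ]
      exact this
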